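/- The cup-i coproducts are natural with respect to simplicial maps: for any simplicial map f : X → Y between ordered simplicial complexes and any integer i, Δ_i ∘ f_• = (f_• ⊗ f_•) ∘ Δ_i as maps C_•(X;𝔽₂) → C_•(Y;𝔽₂) ⊗ C_•(Y;𝔽₂). -/

import Mathlib

open scoped TensorProduct

def posIn (S : Finset ℕ) (u : ℕ) : ℕ := (S.filter (fun v => v ≤ u)).card
def idxFun (U : Finset ℕ) (u : ℕ) : ℕ := (u + posIn U u) % 2
def part0 (U : Finset ℕ) : Finset ℕ := U.filter (fun u => idxFun U u = 0)
def part1 (U : Finset ℕ) : Finset ℕ := U.filter (fun u => idxFun U u = 1)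

variable {V : Type} [LinearOrder V]

/-- `dFace U x` deletes from the simplex `x` the vertices in (0-based) positions `U`. -/
def dFace (U : Finset ℕ) (x : Finset V) : Finset V :=
  ((((x.sort (· ≤ ·)).zipIdx.map Prod.swap).filter (fun p => decide (p.1 ∉ U))).map Prod.snd).toFinset

/-- Mod 2 simplicial chains: the free `𝔽₂`-module on simplices (finite subsets of `V`). -/
abbrev Chains (V : Type) [LinearOrder V] := Finset V →₀ ZMod 2


noncomputable instance {V : Type} [LinearOrder V] :
    Zero (TensorProduct (ZMod 2) (Chains V) (Chains V)) :=
  (inferInstance : AddCommMonoid (TensorProduct (ZMod 2) (Chains V) (Chains V))).toAddMonoid.toZero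

/-- Basis chain corresponding to a simplex. -/
noncomputable def eC (x : Finset V) : Chains V := Finsupp.single x 1

/-- The cup-`i` coproduct on a basis simplex. -/
noncomputable def deltaSimplex (i : ℤ) (x : Finset V) :
    TensorProduct (ZMod 2) (Chains V) (Chains V) :=
  if 0 ≤ i ∧ i ≤ (x.card : ℤ) - 1 then
    ∑ U ∈ Finset.powersetCard (x.card - 1 - i.toNat) (Finset.range x.card),
      eC (dFace (part0 U) x) ⊗ₜ[ZMod 2] eC (dFace (part1 U) x)
  else (0 : TensorProduct (ZMod 2) (Chains V) (Chains V))

/-- The cup-`i` coproduct `Δᵢ`, as a linear map on chains. -/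
noncomputable def deltaMap (V : Type) [LinearOrder V] (i : ℤ) :
    Chains V →ₗ[ZMod 2] TensorProduct (ZMod 2) (Chains V) (Chains V) :=
  Finsupp.lift _ (ZMod 2) (Finset V) (deltaSimplex i)

/-- Mod 2 boundary of a basis simplex. -/
noncomputable def bdSimplex (x : Finset V) : Chains V :=
  if 2 ≤ x.card then ∑ i ∈ Finset.range x.card, eC (dFace {i} x) else 0

/-- Mod 2 simplicial boundary `∂ = Σ dᵢ`. -/
noncomputable def bdMap (V : Type) [LinearOrder V] : Chains V →ₗ[ZMod 2] Chains V :=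
  Finsupp.lift _ (ZMod 2) (Finset V) bdSimplex

/-- Boundary on the tensor product: `∂(a⊗b) = ∂a⊗b + a⊗∂b` (signs trivial mod 2). -/
noncomputable def bdT (V : Type) [LinearOrder V] :
    TensorProduct (ZMod 2) (Chains V) (Chains V) →ₗ[ZMod 2]
      TensorProduct (ZMod 2) (Chains V) (Chains V) :=
  TensorProduct.map (bdMap V) LinearMap.id + TensorProduct.map LinearMap.id (bdMap V)

/-- Transposition of tensor factors `T(a⊗b) = b⊗a`. -/
noncomputable def transp (V : Type) [LinearOrder V] :
    TensorProduct (ZMod 2) (Chains V) (Chains V) →ₗ[ZMod 2]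
      TensorProduct (ZMod 2) (Chains V) (Chains V) :=
  (TensorProduct.comm (ZMod 2) (Chains V) (Chains V)).toLinearMap

/-- Chain map induced by a simplicial (monotone) map `f`. -/
noncomputable def fChain {W : Type} [LinearOrder W] (f : V → W) :
    Chains V →ₗ[ZMod 2] Chains W :=
  Finsupp.lift _ (ZMod 2) (Finset V)
    (fun x => if (x.image f).card = x.card then eC (x.image f) else 0)

/-- Evaluation of a cochain on chains. -/
noncomputable def evalCochain (α : Finset V → ZMod 2) : Chains V →ₗ[ZMod 2] ZMod 2 :=
  Finsupp.lift _ (ZMod 2) (Finset V) α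

/-- Evaluation of a tensor of cochains on a tensor of chains. -/
noncomputable def pairing (α β : Finset V → ZMod 2) :
    TensorProduct (ZMod 2) (Chains V) (Chains V) →ₗ[ZMod 2] ZMod 2 :=
  (LinearMap.mul' (ZMod 2) (ZMod 2)) ∘ₗ TensorProduct.map (evalCochain α) (evalCochain β)

/-- Indicator cochain of a single simplex. -/
def indC (a : Finset V) : Finset V → ZMod 2 := fun y => if y = a then 1 else 0


section Aux

lemma lift_eC {M : Type} [AddCommMonoid M] [Module (ZMod 2) M] (g : Finset V → M)
    (x : Finset V) :
    Finsupp.lift M (ZMod 2) (Finset V) g (eC x) = g x := by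
  simp [eC, Finsupp.lift_apply, Finsupp.sum_single_index]

lemma posIn_succ {U : Finset ℕ} {p : ℕ} (hp : p + 1 ∈ U) :
    posIn U (p + 1) = posIn U p + 1 := by
  unfold posIn
  have h : U.filter (fun v => v ≤ p + 1) = insert (p + 1) (U.filter (fun v => v ≤ p)) := by
    ext v
    simp only [Finset.mem_filter, Finset.mem_insert]
    constructor
    · rintro ⟨hv, hle⟩
      rcases Nat.lt_or_ge v (p + 1) with h | h
      · exact Or.inr ⟨hv, Nat.lt_succ_iff.mp h⟩
      · exact Or.inl (le_antisymm hle h)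
    · rintro (rfl | ⟨hv, hle⟩)
      · exact ⟨hp, le_refl _⟩
      · exact ⟨hv, hle.trans (Nat.le_succ p)⟩
  rw [h, Finset.card_insert_of_notMem (by simp)]

lemma idxFun_succ {U : Finset ℕ} {p : ℕ} (hp : p ∈ U) (hq : p + 1 ∈ U) :
    idxFun U (p + 1) = idxFun U p := by
  unfold idxFun
  rw [posIn_succ hq]
  omega

/-- Key combinatorial fact: for any `U` and adjacent positions `p, p+1`, one of the
two parts avoids both `p` and `p+1`. -/
lemma exists_part_avoiding (U : Finset ℕ) (p : ℕ) :
    ∃ S : Finset ℕ, (S = part0 U ∨ S = part1 U) ∧ p ∉ S ∧ p + 1 ∉ S := by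
  by_cases hp : p ∈ U
  · by_cases hq : p + 1 ∈ U
    · have heq := idxFun_succ hp hq
      rcases Nat.mod_two_eq_zero_or_one (p + posIn U p) with h0 | h1
      · refine ⟨part1 U, Or.inr rfl, ?_, ?_⟩ <;>
          simp only [part1, Finset.mem_filter] at * <;>
          simp [part1, Finset.mem_filter, heq, idxFun] at * <;> omega
      · refine ⟨part0 U, Or.inl rfl, ?_, ?_⟩ <;>
          simp only [part0, Finset.mem_filter] at * <;>
          simp [part0, Finset.mem_filter, heq, idxFun] at * <;> omega
    · rcases Nat.mod_two_eq_zero_or_one (p + posIn U p) with h0 | h1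
      · exact ⟨part1 U, Or.inr rfl, by simp only [part1, Finset.mem_filter]; simp [idxFun, h0],
          by simp [part1, Finset.mem_filter, hq]⟩
      · exact ⟨part0 U, Or.inl rfl, by simp only [part0, Finset.mem_filter]; simp [idxFun, h1],
          by simp [part0, Finset.mem_filter, hq]⟩
  · rcases Nat.mod_two_eq_zero_or_one (p + 1 + posIn U (p + 1)) with h0 | h1
    · exact ⟨part1 U, Or.inr rfl, by simp [part1, Finset.mem_filter, hp],
        by simp only [part1, Finset.mem_filter]; simp [idxFun, h0]⟩
    · exact ⟨part0 U, Or.inl rfl, by simp [part0, Finset.mem_filter, hp],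
        by simp only [part0, Finset.mem_filter]; simp [idxFun, h1]⟩

lemma getElem_mem_dFace {U : Finset ℕ} {x : Finset V} {j : ℕ}
    (hj : j < (x.sort (· ≤ ·)).length) (hjU : j ∉ U) :
    (x.sort (· ≤ ·))[j] ∈ dFace U x := by
  unfold dFace
  rw [List.mem_toFinset, List.mem_map]
  refine ⟨(j, (x.sort (· ≤ ·))[j]), List.mem_filter.2 ⟨?_, by simpa using hjU⟩, rfl⟩
  rw [List.mem_map]
  exact ⟨((x.sort (· ≤ ·))[j], j), List.mem_zipIdx_iff_getElem?.2 (by simp [hj]), rfl⟩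

lemma dFace_subset (U : Finset ℕ) (x : Finset V) : dFace U x ⊆ x := by
  intro v hv
  unfold dFace at hv
  rw [List.mem_toFinset, List.mem_map] at hv
  obtain ⟨⟨a, v⟩, hq, rfl⟩ := hv
  have h1 : (a, v) ∈ (x.sort (· ≤ ·)).zipIdx.map Prod.swap := List.mem_of_mem_filter hq
  obtain ⟨⟨v', a'⟩, h1', hsw⟩ := List.mem_map.1 h1
  simp [Prod.swap] at hsw
  obtain ⟨rfl, rfl⟩ := hsw
  exact (Finset.mem_sort _).1 (List.fst_mem_of_mem_zipIdx h1')

lemma fChain_eC_eq_zero {W : Type} [LinearOrder W] (f : V → W) {s : Finset V}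
    {a b : V} (ha : a ∈ s) (hb : b ∈ s) (hab : a ≠ b) (hfab : f a = f b) :
    fChain f (eC s) = 0 := by
  have h : ¬ Set.InjOn f s := fun h => hab (h ha hb hfab)
  have hcard : ¬ ((s.image f).card = s.card) := fun hc => h (Finset.card_image_iff.mp hc)
  unfold fChain
  rw [lift_eC]
  simp [hcard]

lemma fChain_eC_eq {W : Type} [LinearOrder W] (f : V → W) {s : Finset V}
    (h : (s.image f).card = s.card) :
    fChain f (eC s) = eC (s.image f) := by
  unfold fChain
  rw [lift_eC]
  simp [h]

lemma list_toFinset_map {W : Type} [LinearOrder W] (f : V → W) (l : List V) :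
    (l.map f).toFinset = l.toFinset.image f := by
  ext w
  simp [List.mem_toFinset, Finset.mem_image]

lemma sort_image {W : Type} [LinearOrder W] (f : V → W) (hf : Monotone f) (x : Finset V)
    (hinj : Set.InjOn f x) :
    (x.image f).sort (· ≤ ·) = (x.sort (· ≤ ·)).map f := by
  apply List.Perm.eq_of_pairwise (fun a b _ _ h1 h2 => le_antisymm h1 h2)
    (Finset.pairwise_sort _ _) ?_ ?_
  · exact List.Pairwise.map f (fun a b h => hf h) (Finset.pairwise_sort _ _)
  · apply List.perm_of_nodup_nodup_toFinset_eq (Finset.sort_nodup _ _)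
    · apply (Finset.sort_nodup x (· ≤ ·)).map_on
      intro a ha b hb hab
      exact hinj (by simpa using (Finset.mem_sort _).mp ha)
        (by simpa using (Finset.mem_sort _).mp hb) hab
    · rw [list_toFinset_map, Finset.sort_toFinset, Finset.sort_toFinset]

lemma dFace_image {W : Type} [LinearOrder W] (f : V → W) (hf : Monotone f) (x : Finset V)
    (hinj : Set.InjOn f x) (U : Finset ℕ) :
    dFace U (x.image f) = (dFace U x).image f := by
  unfold dFace
  rw [sort_image f hf x hinj]
  ext w
  simp only [List.mem_toFinset, List.mem_map, List.mem_filter, Finset.mem_image]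
  constructor
  · rintro ⟨q, ⟨⟨r, hr, rfl⟩, hP⟩, rfl⟩
    rw [List.zipIdx_map, List.mem_map] at hr
    obtain ⟨s, hs, rfl⟩ := hr
    exact ⟨s.1, ⟨s.swap, ⟨⟨s, hs, rfl⟩, hP⟩, rfl⟩, rfl⟩
  · rintro ⟨v, ⟨q, ⟨⟨r, hr, rfl⟩, hP⟩, rfl⟩, rfl⟩
    refine ⟨(Prod.map f id r).swap, ⟨⟨Prod.map f id r, ?_, rfl⟩, hP⟩, rfl⟩
    rw [List.zipIdx_map]
    exact List.mem_map_of_mem hr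

lemma exists_adjacent_eq {W : Type} [LinearOrder W] (f : V → W) (hf : Monotone f)
    (x : Finset V) (hcard : ¬ ((x.image f).card = x.card)) :
    ∃ p, ∃ h : p + 1 < (x.sort (· ≤ ·)).length,
      f ((x.sort (· ≤ ·))[p]'(Nat.lt_of_succ_lt h)) = f ((x.sort (· ≤ ·))[p + 1]'h) := by
  by_contra hcon
  push_neg at hcon
  set l := x.sort (· ≤ ·) with hl
  have hnodup : (l.map f).Nodup := by
    have hchain : (l.map f).IsChain (· < ·) := by
      rw [List.isChain_iff_getElem]
      intro j hj
      have hj' : j + 1 < l.length := by simpa using hj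
      have hle : l.get ⟨j, Nat.lt_of_succ_lt hj'⟩ ≤ l.get ⟨j + 1, hj'⟩ :=
        (Finset.pairwise_sort x (· ≤ ·)).rel_get_of_lt (by simp)
      have hne := hcon j hj'
      simp only [List.get_eq_getElem, List.getElem_map]
      simp only [List.get_eq_getElem] at hle
      exact lt_of_le_of_ne (hf hle) (by simpa using hne)
    exact ((List.isChain_iff_pairwise).mp hchain).imp ne_of_lt
  have h1 : (l.map f).toFinset = x.image f := by
    rw [list_toFinset_map, Finset.sort_toFinset]
  have h2 := List.toFinset_card_of_nodup hnodup
  rw [h1] at h2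
  have h3 : l.length = x.card := Finset.length_sort _
  rw [List.length_map, h3] at h2
  exact hcard h2

lemma deltaMap_eC {i : ℤ} (x : Finset V) : deltaMap V i (eC x) = deltaSimplex i x := by
  unfold deltaMap
  exact lift_eC _ _

end Aux

/-- naturality of the cup-i coproducts: for a simplicial map `f`
(a monotone map of vertex posets) and any integer `i`,
`Δᵢ ∘ f_• = (f_• ⊗ f_•) ∘ Δᵢ`. -/
theorem stmt_9 {V W : Type} [LinearOrder V] [LinearOrder W]
    (f : V → W) (hf : Monotone f) (i : ℤ) :
    (deltaMap W i) ∘ₗ (fChain f) =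
      (TensorProduct.map (fChain f) (fChain f)) ∘ₗ (deltaMap V i) := by
  apply Finsupp.lhom_ext
  intro x b
  have hb : (Finsupp.single x b : Chains V) = b • eC x := by
    simp [eC, Finsupp.smul_single]
  rw [hb]
  simp only [map_smul]
  congr 1
  simp only [LinearMap.comp_apply, deltaMap_eC]
  by_cases hinj : ((x.image f).card = x.card)
  · -- injective case
    rw [fChain_eC_eq f hinj, deltaMap_eC]
    have hinj' : Set.InjOn f x := Finset.card_image_iff.mp hinj
    unfold deltaSimplex
    rw [hinj]
    by_cases hi : 0 ≤ i ∧ i ≤ (x.card : ℤ) - 1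
    · rw [if_pos hi, if_pos hi, map_sum]
      apply Finset.sum_congr rfl
      intro U hU
      rw [TensorProduct.map_tmul]
      have key : ∀ S : Finset ℕ,
          eC (dFace S (x.image f)) = fChain f (eC (dFace S x)) := by
        intro S
        have hsub := dFace_subset S x
        have hinjS : Set.InjOn f (dFace S x) := hinj'.mono (by exact_mod_cast hsub)
        rw [dFace_image f hf x hinj' S,
          fChain_eC_eq f (Finset.card_image_iff.mpr hinjS)]
      rw [key, key]
    · rw [if_neg hi, if_neg hi, map_zero]
  · -- degenerate case
    have hz : fChain f (eC x) = 0 := by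
      unfold fChain
      rw [lift_eC]
      simp [hinj]
    rw [hz, map_zero]
    obtain ⟨p, hp, hfp⟩ := exists_adjacent_eq f hf x hinj
    unfold deltaSimplex
    by_cases hi : 0 ≤ i ∧ i ≤ (x.card : ℤ) - 1
    · rw [if_pos hi, map_sum]
      symm
      apply Finset.sum_eq_zero
      intro U hU
      obtain ⟨S, hS01, hpS, hqS⟩ := exists_part_avoiding U p
      have hmem1 : (x.sort (· ≤ ·))[p]'(Nat.lt_of_succ_lt hp) ∈ dFace S x :=
        getElem_mem_dFace (Nat.lt_of_succ_lt hp) hpS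
      have hmem2 : (x.sort (· ≤ ·))[p + 1]'hp ∈ dFace S x :=
        getElem_mem_dFace hp hqS
      have hne : (x.sort (· ≤ ·))[p]'(Nat.lt_of_succ_lt hp)
          ≠ (x.sort (· ≤ ·))[p + 1]'hp := by
        intro h
        have := ((Finset.sort_nodup x (· ≤ ·)).getElem_inj_iff).mp h
        omega
      have hzero : fChain f (eC (dFace S x)) = 0 :=
        fChain_eC_eq_zero f hmem1 hmem2 hne hfp
      rw [TensorProduct.map_tmul]
      rcases hS01 with rfl | rfl
      · rw [hzero, TensorProduct.zero_tmul]
      · rw [hzero, TensorProduct.tmul_zero]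
    · rw [if_neg hi, map_zero]
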